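/- (Theorem 2.8, single-step version) Suppose μ ∈ (0, 1/2], ⟨v, ∇²f(x) v⟩ ≥ μ ‖v‖² for all v ∈ ℝⁿ, 0 < ‖∇f(x)‖ < 3μ⁴/(L_H+η), and let d solve ∇²f(x) d = -∇f(x). Then the unit step satisfies the sufficient decrease condition f(x + d) < f(x) - (η/6)‖d‖³, and ‖∇f(x + d)‖ ≤ (L_H/(2μ²)) ‖∇f(x)‖² ≤ (3/8) ‖∇f(x)‖. -/

import Mathlib

open scoped RealInnerProductSpace

set_option maxHeartbeats 1000000 in
/-- Theorem 2.8, single-step version: local quadratic convergence step. -/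
theorem local_unit_newton_step
    {n : ℕ} (f : EuclideanSpace ℝ (Fin n) → ℝ)
    (gradf : EuclideanSpace ℝ (Fin n) → EuclideanSpace ℝ (Fin n))
    (hessf : EuclideanSpace ℝ (Fin n) → EuclideanSpace ℝ (Fin n) →L[ℝ] EuclideanSpace ℝ (Fin n))
    (hf : ContDiff ℝ 2 f)
    (hgrad : ∀ x, HasGradientAt f (gradf x) x)
    (hhess : ∀ x, HasFDerivAt gradf (hessf x) x)
    (L_H : ℝ) (hLH : 0 < L_H)
    (hlip : ∀ x y, ‖hessf x - hessf y‖ ≤ L_H * ‖x - y‖)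
    (η : ℝ) (hη : 0 < η)
    (μ : ℝ) (hμ : μ ∈ Set.Ioc (0:ℝ) (1/2))
    (x d : EuclideanSpace ℝ (Fin n))
    (hpd : ∀ v : EuclideanSpace ℝ (Fin n), μ * ‖v‖^2 ≤ ⟪v, hessf x v⟫)
    (hg0 : 0 < ‖gradf x‖) (hgsmall : ‖gradf x‖ < 3*μ^4/(L_H+η))
    (hnewton : hessf x d = -gradf x) :
    f (x + d) < f x - η/6 * ‖d‖^3 ∧
    ‖gradf (x + d)‖ ≤ L_H/(2*μ^2) * ‖gradf x‖^2 ∧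
    L_H/(2*μ^2) * ‖gradf x‖^2 ≤ 3/8 * ‖gradf x‖ := by
  obtain ⟨hμ0, hμ2⟩ := hμ
  have hLη : 0 < L_H + η := by linarith
  set g := gradf x with hg
  set nd := ‖d‖ with hnd
  set ng := ‖g‖ with hng
  -- basic facts
  have hdne : d ≠ 0 := by
    intro h
    rw [h] at hnewton
    simp only [map_zero] at hnewton
    have : g = 0 := by
      have := hnewton.symm
      rwa [neg_eq_zero] at this
    rw [hng, this, norm_zero] at hg0
    exact lt_irrefl 0 hg0
  have hnd0 : 0 < nd := norm_pos_iff.mpr hdne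
  -- μ ‖d‖ ≤ ‖g‖
  have hμd : μ * nd ≤ ng := by
    have h1 : μ * nd^2 ≤ ⟪d, hessf x d⟫ := hpd d
    rw [hnewton] at h1
    have h2 : ⟪d, -g⟫ ≤ nd * ng := by
      calc ⟪d, -g⟫ ≤ ‖d‖ * ‖-g‖ := real_inner_le_norm d (-g)
        _ = nd * ng := by rw [norm_neg]
    have := h1.trans h2
    nlinarith
  have hgs : ng * (L_H + η) < 3 * μ^4 := by
    have := hgsmall
    rwa [lt_div_iff₀ hLη] at this
  -- the curve
  set γ : ℝ → EuclideanSpace ℝ (Fin n) := fun t => x + t • d with hγdef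
  have hγ : ∀ t : ℝ, HasDerivAt γ d t := by
    intro t
    simpa [hγdef] using ((hasDerivAt_id t).smul_const d).const_add x
  have hγ0 : γ 0 = x := by simp [hγdef]
  have hγ1 : γ 1 = x + d := by simp [hγdef]
  have hγsub : ∀ t : ℝ, γ t - x = t • d := by intro t; simp [hγdef]
  -- derivative facts
  have hDf : ∀ t : ℝ, HasDerivAt (fun t => f (γ t)) ⟪gradf (γ t), d⟫ t := by
    intro t
    have := (hgrad (γ t)).hasFDerivAt.comp_hasDerivAt t (hγ t)
    simp [InnerProductSpace.toDual_apply_apply] at this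
    exact this
  have hDg : ∀ t : ℝ, HasDerivAt (fun t => gradf (γ t)) (hessf (γ t) d) t := by
    intro t
    exact (hhess (γ t)).comp_hasDerivAt t (hγ t)
  have hDh : ∀ t : ℝ, HasDerivAt (fun t => ⟪gradf (γ t), d⟫) ⟪hessf (γ t) d, d⟫ t := by
    intro t
    have := (hDg t).inner ℝ (hasDerivAt_const t d)
    simpa using this
  -- Lipschitz bounds
  have hlipbd : ∀ t : ℝ, 0 ≤ t → ‖hessf (γ t) d - hessf x d‖ ≤ L_H * t * nd^2 := by
    intro t ht
    have h1 : ‖(hessf (γ t) - hessf x) d‖ ≤ ‖hessf (γ t) - hessf x‖ * ‖d‖ :=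
      ContinuousLinearMap.le_opNorm _ d
    have h2 : ‖hessf (γ t) - hessf x‖ ≤ L_H * (t * nd) := by
      have := hlip (γ t) x
      rwa [hγsub t, norm_smul, Real.norm_eq_abs, abs_of_nonneg ht] at this
    have h3 : ‖(hessf (γ t) - hessf x) d‖ = ‖hessf (γ t) d - hessf x d‖ := by
      simp [ContinuousLinearMap.sub_apply]
    rw [← h3]
    calc ‖(hessf (γ t) - hessf x) d‖ ≤ ‖hessf (γ t) - hessf x‖ * ‖d‖ := h1
      _ ≤ L_H * (t * nd) * nd := by
          apply mul_le_mul_of_nonneg_right h2 (norm_nonneg d)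
      _ = L_H * t * nd^2 := by ring
  set c1 : ℝ := ⟪g, d⟫ with hc1
  set c2 : ℝ := ⟪hessf x d, d⟫ with hc2
  have hc12 : c1 = -c2 := by
    rw [hc1, hc2, hnewton]
    simp [inner_neg_left]
  have hc2μ : μ * nd^2 ≤ c2 := by
    rw [hc2, real_inner_comm]
    exact hpd d
  -- bound on inner derivative
  have hinbd : ∀ t ∈ Set.Icc (0:ℝ) 1, ⟪hessf (γ t) d, d⟫ ≤ c2 + L_H * nd^3 * t := by
    intro t ht
    have h1 : ⟪hessf (γ t) d - hessf x d, d⟫ ≤ ‖hessf (γ t) d - hessf x d‖ * ‖d‖ :=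
      real_inner_le_norm _ _
    have h2 := hlipbd t ht.1
    have h3 : ⟪hessf (γ t) d, d⟫ - c2 = ⟪hessf (γ t) d - hessf x d, d⟫ := by
      rw [hc2, inner_sub_left]
    nlinarith [norm_nonneg d, mul_le_mul_of_nonneg_right h2 (norm_nonneg d)]
  -- first integration: bound on ⟪gradf (γ t), d⟫
  have hstep1 : ∀ t ∈ Set.Icc (0:ℝ) 1,
      ⟪gradf (γ t), d⟫ ≤ c1 + c2 * t + L_H * nd^3 * t^2/2 := by
    set φ : ℝ → ℝ := fun t => ⟪gradf (γ t), d⟫ - c1 - c2 * t - L_H * nd^3 * t^2/2 with hφ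
    have hφd : ∀ t : ℝ, HasDerivAt φ (⟪hessf (γ t) d, d⟫ - c2 - L_H * nd^3 * t) t := by
      intro t
      have h1 := (hDh t).sub_const c1
      have h2 : HasDerivAt (fun t : ℝ => c2 * t) c2 t := by
        simpa using (hasDerivAt_id t).const_mul c2
      have h3 : HasDerivAt (fun t : ℝ => L_H * nd^3 * t^2/2) (L_H * nd^3 * t) t := by
        have := ((hasDerivAt_pow 2 t).const_mul (L_H * nd^3)).div_const 2
        exact this.congr_deriv (by ring)
      have := (h1.sub h2).sub h3
      exact this
    have hanti : AntitoneOn φ (Set.Icc (0:ℝ) 1) := by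
      apply antitoneOn_of_hasDerivWithinAt_nonpos (convex_Icc 0 1)
        (fun t _ => (hφd t).continuousAt.continuousWithinAt)
        (fun t _ => (hφd t).hasDerivWithinAt)
      intro t ht
      rw [interior_Icc] at ht
      have := hinbd t ⟨le_of_lt ht.1, le_of_lt ht.2⟩
      linarith
    intro t ht
    have h0 : φ 0 = 0 := by
      simp [hφ, hγ0, hc1, ← hg]
    have := hanti (Set.left_mem_Icc.mpr zero_le_one) ht ht.1
    rw [h0] at this
    simp only [hφ] at this
    linarith
  -- second integration: bound on f (γ 1)
  have hstep2 : f (x + d) ≤ f x + c1 + c2/2 + L_H * nd^3/6 := by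
    set ψ : ℝ → ℝ := fun t => f (γ t) - f x - c1 * t - c2 * t^2/2 - L_H * nd^3 * t^3/6 with hψ
    have hψd : ∀ t : ℝ, HasDerivAt ψ
        (⟪gradf (γ t), d⟫ - c1 - c2 * t - L_H * nd^3 * t^2/2) t := by
      intro t
      have h0 := (hDf t).sub_const (f x)
      have h1 : HasDerivAt (fun t : ℝ => c1 * t) c1 t := by
        simpa using (hasDerivAt_id t).const_mul c1
      have h2 : HasDerivAt (fun t : ℝ => c2 * t^2/2) (c2 * t) t := by
        have := ((hasDerivAt_pow 2 t).const_mul c2).div_const 2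
        exact this.congr_deriv (by ring)
      have h3 : HasDerivAt (fun t : ℝ => L_H * nd^3 * t^3/6) (L_H * nd^3 * t^2/2) t := by
        have := ((hasDerivAt_pow 3 t).const_mul (L_H * nd^3)).div_const 6
        exact this.congr_deriv (by ring)
      have := ((h0.sub h1).sub h2).sub h3
      exact this
    have hanti : AntitoneOn ψ (Set.Icc (0:ℝ) 1) := by
      apply antitoneOn_of_hasDerivWithinAt_nonpos (convex_Icc 0 1)
        (fun t _ => (hψd t).continuousAt.continuousWithinAt)
        (fun t _ => (hψd t).hasDerivWithinAt)
      intro t ht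
      rw [interior_Icc] at ht
      have := hstep1 t ⟨le_of_lt ht.1, le_of_lt ht.2⟩
      linarith
    have h0 : ψ 0 = 0 := by simp [hψ, hγ0]
    have h1 := hanti (Set.left_mem_Icc.mpr zero_le_one)
      (Set.right_mem_Icc.mpr zero_le_one) zero_le_one
    rw [h0] at h1
    simp only [hψ, hγ1] at h1
    linarith
  -- gradient bound via fencing
  have hgradbd : ‖gradf (x + d)‖ ≤ L_H/2 * nd^2 := by
    set G : ℝ → EuclideanSpace ℝ (Fin n) := fun t => gradf (γ t) - gradf x - t • (hessf x d)
      with hG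
    have hGd : ∀ t : ℝ, HasDerivAt G (hessf (γ t) d - hessf x d) t := by
      intro t
      have h1 := (hDg t).sub_const (gradf x)
      have h2 : HasDerivAt (fun t : ℝ => t • (hessf x d)) (hessf x d) t := by
        simpa using (hasDerivAt_id t).smul_const (hessf x d)
      exact h1.sub h2
    have hB : ∀ t : ℝ, HasDerivAt (fun t => L_H * nd^2 * t^2/2) (L_H * nd^2 * t) t := by
      intro t
      have := ((hasDerivAt_pow 2 t).const_mul (L_H * nd^2)).div_const 2
      exact this.congr_deriv (by ring)
    have key := image_norm_le_of_norm_deriv_right_le_deriv_boundary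
      (f := G) (f' := fun t => hessf (γ t) d - hessf x d) (a := 0) (b := 1)
      (B := fun t => L_H * nd^2 * t^2/2) (B' := fun t => L_H * nd^2 * t)
      (fun t _ => (hGd t).continuousAt.continuousWithinAt)
      (fun t _ => (hGd t).hasDerivWithinAt.mono (Set.subset_univ _) |>.mono_of_mem_nhdsWithin
        (by exact Filter.univ_mem))
      (by simp [hG, hγ0])
      hB
      (by
        intro t ht
        have := hlipbd t ht.1
        calc ‖hessf (γ t) d - hessf x d‖ ≤ L_H * t * nd^2 := this
          _ = L_H * nd^2 * t := by ring)
    have h1 := key (Set.right_mem_Icc.mpr zero_le_one)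
    have hG1 : G 1 = gradf (x + d) := by
      simp [hG, hγ1, hnewton, ← hg]
    rw [hG1] at h1
    calc ‖gradf (x + d)‖ ≤ L_H * nd^2 * 1^2/2 := h1
      _ = L_H/2 * nd^2 := by ring
  clear hstep1 hDf hDg hDh hγ hlipbd hinbd hhess hgrad hf hlip
  -- now the algebra
  have hμ2' : μ^2 ≤ 1/4 := by nlinarith
  have hndsmall : nd * (L_H + η) < 3 * μ := by
    have h1 : μ * nd * (L_H + η) ≤ ng * (L_H + η) :=
      mul_le_mul_of_nonneg_right hμd (le_of_lt hLη)
    have h2 : μ * nd * (L_H + η) < 3 * μ^4 := lt_of_le_of_lt h1 hgs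
    nlinarith
  refine ⟨?_, ?_, ?_⟩
  · -- decrease
    have h1 : f (x + d) ≤ f x - c2/2 + L_H * nd^3/6 := by
      rw [hc12] at hstep2
      linarith
    have h2 : f (x + d) ≤ f x - μ/2 * nd^2 + L_H/6 * nd^3 := by
      nlinarith
    have h3 : L_H/6 * nd^3 + η/6 * nd^3 < μ/2 * nd^2 := by
      have := mul_lt_mul_of_pos_right hndsmall (by positivity : (0:ℝ) < nd^2)
      nlinarith
    linarith
  · -- gradient bound
    have h1 : nd^2 ≤ ng^2 / μ^2 := by
      rw [le_div_iff₀ (by positivity)]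
      nlinarith [mul_le_mul hμd hμd (mul_nonneg hμ0.le hnd0.le) (norm_nonneg g)]
    calc ‖gradf (x + d)‖ ≤ L_H/2 * nd^2 := hgradbd
      _ ≤ L_H/2 * (ng^2/μ^2) := by
          apply mul_le_mul_of_nonneg_left h1 (by positivity)
      _ = L_H/(2*μ^2) * ng^2 := by
          field_simp
  · -- final bound
    rw [div_mul_eq_mul_div, div_le_iff₀ (by positivity)]
    have hLg : L_H * ng < 3 * μ^4 := by nlinarith
    nlinarith [mul_lt_mul_of_pos_right hLg hg0,
      mul_le_mul_of_nonneg_right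
        (mul_le_mul_of_nonneg_left hμ2' (by positivity : (0:ℝ) ≤ (3:ℝ)*μ^2)) hg0.le]
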